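/- Let T : I → I be a Borel measurable map of a compact interval I, let ζ ∈ I be a periodic point of T of period p ≥ 1 such that T^p restricted to some neighbourhood of ζ is a C¹ diffeomorphism onto its image with |(T^p)′(ζ)| > 1, and let μ be a T-invariant Borel probability measure on I, absolutely continuous with respect to Lebesgue measure, whose density has a version that is continuous and strictly positive at ζ. Set θ = 1 − |(T^p)′(ζ)|^{−1} ∈ (0,1), let (B_n) be open balls centred at ζ with radii tending to 0, and for x ∈ E(B_n) define the cluster size K_n(x) = inf{k ≥ 0 : T^p(x) ∈ Q_k(B_n)}. Then for every n and every k ≥ 0 the exact identity μ_{E(B_n)}({x : T^p(x) ∈ U_k(B_n)}) = μ(Q_k(B_n))/μ(Q(B_n)) holds, and consequently for every k ≥ 0, μ_{E(B_n)}({K_n = k}) → θ(1−θ)^k as n → ∞; that is, under μ_{E(B_n)} the cluster size K_n converges in distribution to the geometric law with parameter θ on {0,1,2,…}. -/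

import Mathlib

open MeasureTheory Filter Set ProbabilityTheory
open scoped ENNReal Topology

noncomputable section

variable {X : Type*}

/-- `U_0(B) = B` and `U_{k+1}(B) = T^{-p}(U_k(B)) ∩ B`. -/
def Uset (T : X → X) (p : ℕ) (B : Set X) : ℕ → Set X
  | 0 => B
  | (k+1) => (T^[p]) ⁻¹' (Uset T p B k) ∩ B

/-- The annuli: `Q_0(B) = B ∩ T^{-p}(Bᶜ)` and `Q_{k+1}(B) = T^{-p}(Q_k(B)) ∩ B`. -/
def Qann (T : X → X) (p : ℕ) (B : Set X) : ℕ → Set X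
  | 0 => B ∩ (T^[p]) ⁻¹' Bᶜ
  | (k+1) => (T^[p]) ⁻¹' (Qann T p B k) ∩ B

/-- The entrance set `E(B) = T^{-p}(B) ∖ B`. -/
def Eset (T : X → X) (p : ℕ) (B : Set X) : Set X := (T^[p]) ⁻¹' B \ B

end

section Aux

variable {X : Type*} (T : X → X) (p : ℕ) (B : Set X)

lemma Uset_succ' (k : ℕ) : Uset T p B (k+1) = (T^[p]) ⁻¹' (Uset T p B k) ∩ B := rfl

lemma Uset_subset_base : ∀ k, Uset T p B k ⊆ B
  | 0 => subset_rfl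
  | (_+1) => inter_subset_right

lemma Qann_subset_base : ∀ k, Qann T p B k ⊆ B
  | 0 => inter_subset_left
  | (_+1) => inter_subset_right

lemma Uset_succ_subset : ∀ k, Uset T p B (k+1) ⊆ Uset T p B k
  | 0 => inter_subset_right
  | (k+1) => inter_subset_inter (preimage_mono (Uset_succ_subset k)) subset_rfl

lemma Uset_antitone : Antitone (Uset T p B) :=
  antitone_nat_of_succ_le (Uset_succ_subset T p B)

lemma Qann_eq_diff : ∀ k, Qann T p B k = Uset T p B k \ Uset T p B (k+1)
  | 0 => by
      ext x
      simp only [Qann, Uset, mem_inter_iff, mem_preimage, mem_compl_iff, mem_diff]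
      tauto
  | (k+1) => by
      ext x
      simp only [Qann, Uset, Qann_eq_diff k, mem_inter_iff, mem_preimage, mem_diff]
      tauto

variable [MeasurableSpace X]

lemma Uset_measurable (hT : Measurable (T^[p])) (hB : MeasurableSet B) :
    ∀ k, MeasurableSet (Uset T p B k)
  | 0 => hB
  | (k+1) => (hT (Uset_measurable hT hB k)).inter hB

lemma Qann_measurable (hT : Measurable (T^[p])) (hB : MeasurableSet B) (k : ℕ) :
    MeasurableSet (Qann T p B k) := by
  rw [Qann_eq_diff]
  exact (Uset_measurable T p B hT hB k).diff (Uset_measurable T p B hT hB (k+1))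

lemma Eset_measurable (hT : Measurable (T^[p])) (hB : MeasurableSet B) :
    MeasurableSet (Eset T p B) := (hT hB).diff hB

end Aux

section MeasAux

set_option linter.unusedSectionVars false

variable {α : Type*} [MeasurableSpace α] {μ : Measure α} [IsFiniteMeasure μ]

lemma key0 {f : α → α} (hf : MeasurePreserving f μ μ) {A B : Set α}
    (hA : MeasurableSet A) (hB : MeasurableSet B) :
    μ (f ⁻¹' A \ B) + μ (f ⁻¹' A ∩ B) = μ A := by
  rw [add_comm, measure_inter_add_diff _ hB, hf.measure_preimage hA.nullMeasurableSet]

variable {T : α → α} {p : ℕ} (hT : Measurable (T^[p]))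
  (hS : MeasurePreserving (T^[p]) μ μ) {B : Set α} (hB : MeasurableSet B)

include hT hS hB

lemma muQ_add (k : ℕ) :
    μ (Qann T p B k) + μ (Uset T p B (k+1)) = μ (Uset T p B k) := by
  have h := measure_inter_add_diff (μ := μ) (Uset T p B k)
    (Uset_measurable T p B hT hB (k+1))
  rw [Set.inter_eq_right.mpr (Uset_succ_subset T p B k)] at h
  rw [Qann_eq_diff, add_comm]
  exact h

lemma muE_inter_U (k : ℕ) :
    μ (Eset T p B ∩ (T^[p]) ⁻¹' (Uset T p B k)) = μ (Qann T p B k) := by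
  have hsets : Eset T p B ∩ (T^[p]) ⁻¹' (Uset T p B k)
      = (T^[p]) ⁻¹' (Uset T p B k) \ B := by
    ext x
    simp only [Eset, mem_inter_iff, mem_diff, mem_preimage]
    exact ⟨fun h => ⟨h.2, h.1.2⟩, fun h => ⟨⟨Uset_subset_base T p B k h.1, h.2⟩, h.1⟩⟩
  have h1 := key0 hS (Uset_measurable T p B hT hB k) hB
  have h2 := muQ_add hT hS hB k
  rw [hsets]
  have h3 : (T^[p]) ⁻¹' (Uset T p B k) ∩ B = Uset T p B (k+1) := rfl
  rw [h3] at h1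
  exact (ENNReal.add_left_inj (measure_ne_top μ _)).mp (h1.trans h2.symm)

lemma muE_eq : μ (Eset T p B) = μ (Qann T p B 0) := by
  have h : Eset T p B ∩ (T^[p]) ⁻¹' (Uset T p B 0) = Eset T p B :=
    Set.inter_eq_left.mpr (fun x hx => hx.1)
  rw [← h]
  exact muE_inter_U hT hS hB 0

lemma muE_inter_Q (k : ℕ) :
    μ (Eset T p B ∩ (T^[p]) ⁻¹' (Qann T p B k)) + μ (Qann T p B (k+1))
      = μ (Qann T p B k) := by
  have hsets : Eset T p B ∩ (T^[p]) ⁻¹' (Qann T p B k)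
      = (T^[p]) ⁻¹' (Qann T p B k) \ B := by
    ext x
    simp only [Eset, mem_inter_iff, mem_diff, mem_preimage]
    exact ⟨fun h => ⟨h.2, h.1.2⟩, fun h => ⟨⟨Qann_subset_base T p B k h.1, h.2⟩, h.1⟩⟩
  have h1 := key0 hS (Qann_measurable T p B hT hB k) hB
  have h3 : (T^[p]) ⁻¹' (Qann T p B k) ∩ B = Qann T p B (k+1) := rfl
  rw [h3] at h1
  rw [hsets]
  exact h1

end MeasAux

/-- Lower mean-value bound on a ball. -/
lemma lower_aux {f : ℝ → ℝ} {c δ C : ℝ} (hC : 0 ≤ C)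
    (hf : ∀ x ∈ Metric.ball c δ, DifferentiableAt ℝ f x)
    (hC' : ∀ x ∈ Metric.ball c δ, C ≤ deriv f x) :
    ∀ x ∈ Metric.ball c δ, C * |x - c| ≤ |f x - f c| := by
  intro x hx
  have hδ : 0 < δ := Metric.pos_of_mem_ball hx
  have hc : c ∈ Metric.ball c δ := Metric.mem_ball_self hδ
  have hconv : Convex ℝ (Metric.ball c δ) := convex_ball c δ
  have hint : interior (Metric.ball c δ) = Metric.ball c δ :=
    (Metric.isOpen_ball).interior_eq
  have hcont : ContinuousOn f (Metric.ball c δ) :=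
    fun y hy => (hf y hy).continuousAt.continuousWithinAt
  have hdiff : DifferentiableOn ℝ f (interior (Metric.ball c δ)) := by
    rw [hint]; exact fun y hy => (hf y hy).differentiableWithinAt
  have key := hconv.mul_sub_le_image_sub_of_le_deriv hcont hdiff
    (by rw [hint]; exact hC')
  rcases le_total c x with h | h
  · have := key c hc x hx h
    rw [abs_of_nonneg (sub_nonneg.mpr h)]
    exact le_trans this (le_abs_self _)
  · have := key x hx c hc h
    rw [abs_of_nonpos (sub_nonpos.mpr h)]
    have h2 : C * (c - x) ≤ |f x - f c| := by
      rw [abs_sub_comm]; exact le_trans this (le_abs_self _)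
    simpa [neg_sub] using h2

lemma div_helper' {b X Y : ℝ} (hb : b ≠ 0) : (X/b)/(Y/b) = X/Y := by
  rcases eq_or_ne Y 0 with h|h
  · simp [h]
  · field_simp

set_option maxHeartbeats 1600000 in
/-- In the setting of a periodic point `ζ` of period `p` at which `T^p`
is locally a `C¹` diffeomorphism with `|(T^p)'(ζ)| > 1` and an invariant absolutely
continuous measure with density continuous and positive at `ζ`, set
`θ = 1 - |(T^p)'(ζ)|⁻¹`. For shrinking balls `B_n` around `ζ` one has the exact identity
`μ_{E(B_n)}(T^{-p}(U_k(B_n))) = μ(Q_k(B_n))/μ(Q(B_n))` for all `n, k`, and consequently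
the cluster size `K_n(x) = inf{k : T^p x ∈ Q_k(B_n)}` satisfies
`μ_{E(B_n)}({K_n = k}) → θ (1-θ)^k` for every `k`, i.e. `K_n` converges in distribution
to the geometric law of parameter `θ` on `{0,1,2,…}`. -/
theorem statement13 (T : ℝ → ℝ) (hTmeas : Measurable T)
    (l u : ℝ) (hlu : l < u) (hmap : Set.MapsTo T (Set.Icc l u) (Set.Icc l u))
    (ζ : ℝ) (hζI : ζ ∈ Set.Icc l u)
    (p : ℕ) (hp : 1 ≤ p) (hper : T^[p] ζ = ζ)
    (U : Set ℝ) (hU : IsOpen U) (hζU : ζ ∈ U)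
    (hC1 : ContDiffOn ℝ 1 (T^[p]) U) (hinj : Set.InjOn (T^[p]) U)
    (hd : ∀ x ∈ U, deriv (T^[p]) x ≠ 0) (hexp : 1 < |deriv (T^[p]) ζ|)
    (μ : Measure ℝ) [IsProbabilityMeasure μ] (hinv : MeasurePreserving T μ μ)
    (hsupp : μ (Set.Icc l u)ᶜ = 0)
    (ρ : ℝ → ℝ) (hρ : μ = MeasureTheory.volume.withDensity (fun x => ENNReal.ofReal (ρ x)))
    (hρcont : ContinuousAt ρ ζ) (hρpos : 0 < ρ ζ)
    (r : ℕ → ℝ) (hrpos : ∀ n, 0 < r n) (hr0 : Tendsto r atTop (𝓝 0)) :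
    (∀ n : ℕ, ∀ k : ℕ,
      μ[|Eset T p (Metric.ball ζ (r n))] ((T^[p]) ⁻¹' (Uset T p (Metric.ball ζ (r n)) k))
        = μ (Qann T p (Metric.ball ζ (r n)) k) / μ (Qann T p (Metric.ball ζ (r n)) 0)) ∧
    ∀ k : ℕ, Tendsto (fun n =>
        μ[|Eset T p (Metric.ball ζ (r n))]
          {x | T^[p] x ∈ Qann T p (Metric.ball ζ (r n)) k ∧
            ∀ j < k, T^[p] x ∉ Qann T p (Metric.ball ζ (r n)) j}) atTop
      (𝓝 (ENNReal.ofReal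
        ((1 - |deriv (T^[p]) ζ|⁻¹) * (|deriv (T^[p]) ζ|⁻¹) ^ k))) := by
  have hSmeas : Measurable (T^[p]) := hTmeas.iterate p
  have hSpres : MeasurePreserving (T^[p]) μ μ := hinv.iterate p
  have hBmeas : ∀ n : ℕ, MeasurableSet (Metric.ball ζ (r n)) := fun n => measurableSet_ball
  set lam := |deriv (T^[p]) ζ| with hlamdef
  have hlam1 : 1 < lam := hexp
  have hlam0 : 0 < lam := lt_trans one_pos hlam1
  -- ========== main analytic estimate ==========
  have main : ∀ ε : ℝ, 0 < ε → ε < 1 - lam⁻¹ →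
      ∃ δ : ℝ, 0 < δ ∧ ∀ r' : ℝ, 0 < r' → r' ≤ δ →
        0 < (μ (Metric.ball ζ r')).toReal ∧ ∀ k : ℕ,
        ((1-ε)/(1+ε)) * (1/(lam*(1+ε)))^k
          ≤ (μ (Uset T p (Metric.ball ζ r') k)).toReal / (μ (Metric.ball ζ r')).toReal ∧
        (μ (Uset T p (Metric.ball ζ r') k)).toReal / (μ (Metric.ball ζ r')).toReal
          ≤ ((1+ε)/(1-ε)) * (1/(lam*(1-ε)))^k := by
    intro ε hε hεU
    have hliplt : lam⁻¹ < 1 := inv_lt_one_of_one_lt₀ hlam1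
    have hlipos : 0 < lam⁻¹ := inv_pos.mpr hlam0
    have hε1 : ε < 1 := by linarith
    have h1ε : 0 < 1 - ε := by linarith
    have hlaminv : lam * lam⁻¹ = 1 := mul_inv_cancel₀ (ne_of_gt hlam0)
    have hl1 : 1 < lam * (1 - ε) := by nlinarith
    have hL1 : 1 < lam * (1 + ε) := by nlinarith
    set L := lam * (1 + ε) with hLdef
    set el := lam * (1 - ε) with heldef
    have hl0 : 0 < el := lt_trans one_pos hl1
    have hL0 : 0 < L := lt_trans one_pos hL1
    -- find δ
    have hUev : ∀ᶠ x in 𝓝 ζ, x ∈ U := eventually_of_mem (hU.mem_nhds hζU) (fun x hx => hx)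
    have hdc : ContinuousAt (deriv (T^[p])) ζ :=
      (hC1.continuousOn_deriv_of_isOpen hU le_rfl).continuousAt (hU.mem_nhds hζU)
    have h2 : ∀ᶠ x in 𝓝 ζ, |deriv (T^[p]) x - deriv (T^[p]) ζ| < ε * lam := by
      have := Metric.tendsto_nhds.mp hdc (ε*lam) (mul_pos hε hlam0)
      simpa [Real.dist_eq] using this
    have h3 : ∀ᶠ x in 𝓝 ζ, |ρ x - ρ ζ| < ε * ρ ζ := by
      have := Metric.tendsto_nhds.mp hρcont (ε * ρ ζ) (mul_pos hε hρpos)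
      simpa [Real.dist_eq] using this
    obtain ⟨δ, hδpos, hδ⟩ := Metric.eventually_nhds_iff.mp ((hUev.and h2).and h3)
    refine ⟨δ, hδpos, ?_⟩
    intro r' hr' hr'δ
    have hBsub : Metric.ball ζ r' ⊆ Metric.ball ζ δ := Metric.ball_subset_ball hr'δ
    have hmem : ∀ x ∈ Metric.ball ζ δ, x ∈ U := fun x hx => (hδ (Metric.mem_ball.mp hx)).1.1
    have hdiffat : ∀ x ∈ Metric.ball ζ δ, DifferentiableAt ℝ (T^[p]) x := fun x hx =>
      (hC1.differentiableOn one_ne_zero).differentiableAt (hU.mem_nhds (hmem x hx))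
    have hζδ : ζ ∈ Metric.ball ζ δ := Metric.mem_ball_self hδpos
    have hderivnear : ∀ x ∈ Metric.ball ζ δ, |deriv (T^[p]) x - deriv (T^[p]) ζ| < ε * lam :=
      fun x hx => (hδ (Metric.mem_ball.mp hx)).1.2
    have hup : ∀ x ∈ Metric.ball ζ δ, |T^[p] x - ζ| ≤ L * |x - ζ| := by
      intro x hx
      have hbound : ∀ y ∈ Metric.ball ζ δ, ‖deriv (T^[p]) y‖ ≤ L := by
        intro y hy
        have h := hderivnear y hy
        have h2 := abs_sub_abs_le_abs_sub (deriv (T^[p]) y) (deriv (T^[p]) ζ)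
        rw [Real.norm_eq_abs, hLdef]
        rw [← hlamdef] at h2
        nlinarith [abs_nonneg (deriv (T^[p]) y)]
      have := (convex_ball ζ δ).norm_image_sub_le_of_norm_deriv_le hdiffat hbound hζδ hx
      simpa [Real.norm_eq_abs, hper] using this
    have hlow : ∀ x ∈ Metric.ball ζ δ, el * |x - ζ| ≤ |T^[p] x - ζ| := by
      have hd0 : deriv (T^[p]) ζ ≠ 0 := by
        intro h0
        rw [hlamdef, h0, abs_zero] at hlam1
        linarith
      rcases hd0.lt_or_gt with hneg | hpos
      · have hlameq : lam = -(deriv (T^[p]) ζ) := by rw [hlamdef, abs_of_neg hneg]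
        have key := lower_aux (f := fun x => -(T^[p] x)) (c := ζ) (δ := δ) (C := el)
          (le_of_lt hl0) (fun x hx => (hdiffat x hx).neg) ?_
        · intro x hx
          have h : el * |x - ζ| ≤ |(-(T^[p] x)) - (-(T^[p] ζ))| := key x hx
          have heq : |(-(T^[p] x)) - (-(T^[p] ζ))| = |T^[p] x - ζ| := by
            rw [neg_sub_neg, abs_sub_comm, hper]
          rwa [heq] at h
        · intro x hx
          have h := hderivnear x hx
          have habs := abs_lt.mp h
          rw [show (fun x => -(T^[p] x)) = -(T^[p]) from rfl, deriv.neg]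
          nlinarith
      · have hlameq : lam = deriv (T^[p]) ζ := by rw [hlamdef, abs_of_pos hpos]
        have key := lower_aux (f := (T^[p])) (c := ζ) (δ := δ) (C := el)
          (le_of_lt hl0) hdiffat ?_
        · intro x hx
          have h := key x hx
          simpa [hper] using h
        · intro x hx
          have h := hderivnear x hx
          have habs := abs_lt.mp h
          nlinarith
    -- inclusions
    have hUb : ∀ k, Uset T p (Metric.ball ζ r') k ⊆ Metric.ball ζ ((1/el)^k * r') := by
      intro k; induction k with
      | zero => simp [Uset]
      | succ k ih =>
        intro x hx
        obtain ⟨hx1, hx2⟩ := hx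
        have hxδ : x ∈ Metric.ball ζ δ := hBsub hx2
        have hS := ih hx1
        have h1 : el * |x - ζ| ≤ |T^[p] x - ζ| := hlow x hxδ
        have h2 : |T^[p] x - ζ| < (1/el)^k * r' := by
          have := Metric.mem_ball.mp hS; rwa [Real.dist_eq] at this
        rw [Metric.mem_ball, Real.dist_eq]
        have h3 : |x - ζ| < ((1/el)^k * r') / el := by
          rw [lt_div_iff₀ hl0]
          calc |x - ζ| * el = el * |x - ζ| := mul_comm _ _
            _ ≤ |T^[p] x - ζ| := h1
            _ < (1/el)^k * r' := h2
        calc |x - ζ| < ((1/el)^k * r')/el := h3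
          _ = (1/el)^(k+1) * r' := by rw [pow_succ]; ring
    have hUs : ∀ k, Metric.ball ζ ((1/L)^k * r') ⊆ Uset T p (Metric.ball ζ r') k := by
      intro k; induction k with
      | zero => simp [Uset]
      | succ k ih =>
        intro x hx
        have hxd : |x - ζ| < (1/L)^(k+1) * r' := by
          have := Metric.mem_ball.mp hx; rwa [Real.dist_eq] at this
        have hpow1 : (1/L)^(k+1) ≤ 1 :=
          pow_le_one₀ (by positivity) (by rw [div_le_one hL0]; linarith)
        have hxB : x ∈ Metric.ball ζ r' := by
          rw [Metric.mem_ball, Real.dist_eq]; nlinarith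
        have hxδ : x ∈ Metric.ball ζ δ := hBsub hxB
        have h1 : |T^[p] x - ζ| ≤ L * |x - ζ| := hup x hxδ
        have h2 : |T^[p] x - ζ| < (1/L)^k * r' := by
          have hmul : L * |x - ζ| < L * ((1/L)^(k+1) * r') := by
            exact mul_lt_mul_of_pos_left hxd hL0
          have heq : L * ((1/L)^(k+1) * r') = (1/L)^k * r' := by
            have hc : L * (1/L) = 1 := mul_one_div_cancel (ne_of_gt hL0)
            calc L * ((1/L)^(k+1) * r') = (L * (1/L)) * ((1/L)^k * r') := by
                  rw [pow_succ]; ring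
              _ = (1/L)^k * r' := by rw [hc, one_mul]
          linarith
        exact ⟨ih (by rw [Metric.mem_ball, Real.dist_eq]; exact h2), hxB⟩
    -- density bounds
    have hρub : ∀ x ∈ Metric.ball ζ δ, ρ x ≤ (1+ε) * ρ ζ := by
      intro x hx
      have h := abs_lt.mp (hδ (Metric.mem_ball.mp hx)).2
      nlinarith
    have hρlb : ∀ x ∈ Metric.ball ζ δ, (1-ε) * ρ ζ ≤ ρ x := by
      intro x hx
      have h := abs_lt.mp (hδ (Metric.mem_ball.mp hx)).2
      nlinarith
    -- ball measure bounds
    have hballub : ∀ s : ℝ, 0 < s → s ≤ δ →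
        μ (Metric.ball ζ s) ≤ ENNReal.ofReal ((1+ε) * ρ ζ) * ENNReal.ofReal (2*s) := by
      intro s hs hsδ
      rw [hρ, withDensity_apply _ measurableSet_ball]
      calc ∫⁻ x in Metric.ball ζ s, ENNReal.ofReal (ρ x) ∂volume
          ≤ ∫⁻ _x in Metric.ball ζ s, ENNReal.ofReal ((1+ε) * ρ ζ) ∂volume := by
            apply lintegral_mono_ae
            rw [ae_restrict_iff' measurableSet_ball]
            exact ae_of_all _ (fun x hx =>
              ENNReal.ofReal_le_ofReal (hρub x (Metric.ball_subset_ball hsδ hx)))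
        _ = ENNReal.ofReal ((1+ε) * ρ ζ) * volume (Metric.ball ζ s) :=
            setLIntegral_const _ _
        _ = _ := by rw [Real.volume_ball]
    have hballlb : ∀ s : ℝ, 0 < s → s ≤ δ →
        ENNReal.ofReal ((1-ε) * ρ ζ) * ENNReal.ofReal (2*s) ≤ μ (Metric.ball ζ s) := by
      intro s hs hsδ
      rw [hρ, withDensity_apply _ measurableSet_ball]
      calc ENNReal.ofReal ((1-ε) * ρ ζ) * ENNReal.ofReal (2*s)
          = ENNReal.ofReal ((1-ε) * ρ ζ) * volume (Metric.ball ζ s) := by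
            rw [Real.volume_ball]
        _ = ∫⁻ _x in Metric.ball ζ s, ENNReal.ofReal ((1-ε) * ρ ζ) ∂volume :=
            (setLIntegral_const _ _).symm
        _ ≤ ∫⁻ x in Metric.ball ζ s, ENNReal.ofReal (ρ x) ∂volume := by
            apply lintegral_mono_ae
            rw [ae_restrict_iff' measurableSet_ball]
            exact ae_of_all _ (fun x hx =>
              ENNReal.ofReal_le_ofReal (hρlb x (Metric.ball_subset_ball hsδ hx)))
    -- toReal bounds for the base ball
    have hbub : (μ (Metric.ball ζ r')).toReal ≤ (1+ε) * ρ ζ * (2*r') := by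
      have h := hballub r' hr' hr'δ
      have h2 := ENNReal.toReal_mono (by finiteness) h
      rwa [ENNReal.toReal_mul, ENNReal.toReal_ofReal (by positivity),
        ENNReal.toReal_ofReal (by positivity)] at h2
    have hblb : (1-ε) * ρ ζ * (2*r') ≤ (μ (Metric.ball ζ r')).toReal := by
      have h := hballlb r' hr' hr'δ
      have h2 := ENNReal.toReal_mono (measure_ne_top μ _) h
      rwa [ENNReal.toReal_mul, ENNReal.toReal_ofReal (by positivity),
        ENNReal.toReal_ofReal (by positivity)] at h2
    have hbpos : 0 < (μ (Metric.ball ζ r')).toReal :=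
      lt_of_lt_of_le (by positivity) hblb
    refine ⟨hbpos, ?_⟩
    intro k
    -- U_k measure bounds
    have hsl : 0 < (1/el)^k * r' := by positivity
    have hslδ : (1/el)^k * r' ≤ δ := by
      have h1 : (1/el)^k ≤ 1 := pow_le_one₀ (by positivity) (by rw [div_le_one hl0]; linarith)
      nlinarith
    have hsL : 0 < (1/L)^k * r' := by positivity
    have hsLδ : (1/L)^k * r' ≤ δ := by
      have h1 : (1/L)^k ≤ 1 := pow_le_one₀ (by positivity) (by rw [div_le_one hL0]; linarith)
      nlinarith
    have hAub : (μ (Uset T p (Metric.ball ζ r') k)).toReal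
        ≤ (1+ε) * ρ ζ * (2*((1/el)^k * r')) := by
      have h0 : μ (Uset T p (Metric.ball ζ r') k) ≤ μ (Metric.ball ζ ((1/el)^k * r')) :=
        measure_mono (hUb k)
      have h1 := le_trans h0 (hballub _ hsl hslδ)
      have h2 := ENNReal.toReal_mono (by finiteness) h1
      rwa [ENNReal.toReal_mul, ENNReal.toReal_ofReal (by positivity),
        ENNReal.toReal_ofReal (by positivity)] at h2
    have hAlb : (1-ε) * ρ ζ * (2*((1/L)^k * r'))
        ≤ (μ (Uset T p (Metric.ball ζ r') k)).toReal := by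
      have h0 : μ (Metric.ball ζ ((1/L)^k * r')) ≤ μ (Uset T p (Metric.ball ζ r') k) :=
        measure_mono (hUs k)
      have h1 := le_trans (hballlb _ hsL hsLδ) h0
      have h2 := ENNReal.toReal_mono (measure_ne_top μ _) h1
      rwa [ENNReal.toReal_mul, ENNReal.toReal_ofReal (by positivity),
        ENNReal.toReal_ofReal (by positivity)] at h2
    have hρζ : ρ ζ ≠ 0 := ne_of_gt hρpos
    have hr'0 : r' ≠ 0 := ne_of_gt hr'
    constructor
    · refine le_trans (le_of_eq ?_) (div_le_div₀ ENNReal.toReal_nonneg hAlb hbpos hbub)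
      rw [one_div, inv_pow]
      field_simp
    · refine le_trans (div_le_div₀ (by positivity) hAub (by positivity) hblb) (le_of_eq ?_)
      rw [one_div, inv_pow]
      field_simp

  -- ========== ratio limits ==========
  have hratio : ∀ k : ℕ, Tendsto (fun n =>
      (μ (Uset T p (Metric.ball ζ (r n)) k)).toReal / (μ (Metric.ball ζ (r n))).toReal)
      atTop (𝓝 ((lam⁻¹)^k)) := by
    intro k
    have hliplt : lam⁻¹ < 1 := inv_lt_one_of_one_lt₀ hlam1
    have hlipos : 0 < lam⁻¹ := inv_pos.mpr hlam0
    rw [tendsto_order]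
    constructor
    · intro c hc
      have hG0 : (fun e : ℝ => ((1-e)/(1+e)) * (1/(lam*(1+e)))^k) 0 = (lam⁻¹)^k := by
        norm_num
      have hGcont : ContinuousAt (fun e : ℝ => ((1-e)/(1+e)) * (1/(lam*(1+e)))^k) 0 := by
        apply ContinuousAt.mul
        · exact ((continuousAt_const.sub continuousAt_id).div
            (continuousAt_const.add continuousAt_id) (by norm_num))
        · exact (continuousAt_const.div
            (continuousAt_const.mul (continuousAt_const.add continuousAt_id))
            (by simpa [hlamdef] using ne_of_gt hlam0)).pow k
      have hev1 : ∀ᶠ e in 𝓝 (0:ℝ), c < ((1-e)/(1+e)) * (1/(lam*(1+e)))^k :=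
        hGcont.eventually (eventually_gt_nhds (by rw [hG0]; exact hc))
      have hev2 : ∀ᶠ e in 𝓝 (0:ℝ), e < 1 - lam⁻¹ :=
        eventually_lt_nhds (by linarith)
      have hev := (((hev1.and hev2).filter_mono nhdsWithin_le_nhds).and
        (eventually_mem_nhdsWithin (s := Set.Ioi (0:ℝ)))).exists
      obtain ⟨e, ⟨hcG, heU⟩, he0⟩ := hev
      obtain ⟨δ, hδpos, hmain⟩ := main e he0 heU
      filter_upwards [hr0.eventually (eventually_lt_nhds hδpos)] with n hn
      exact lt_of_lt_of_le hcG ((hmain (r n) (hrpos n) hn.le).2 k).1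
    · intro c hc
      have hG0 : (fun e : ℝ => ((1+e)/(1-e)) * (1/(lam*(1-e)))^k) 0 = (lam⁻¹)^k := by
        norm_num
      have hGcont : ContinuousAt (fun e : ℝ => ((1+e)/(1-e)) * (1/(lam*(1-e)))^k) 0 := by
        apply ContinuousAt.mul
        · exact ((continuousAt_const.add continuousAt_id).div
            (continuousAt_const.sub continuousAt_id) (by norm_num))
        · exact (continuousAt_const.div
            (continuousAt_const.mul (continuousAt_const.sub continuousAt_id))
            (by simpa [hlamdef] using ne_of_gt hlam0)).pow k
      have hev1 : ∀ᶠ e in 𝓝 (0:ℝ), ((1+e)/(1-e)) * (1/(lam*(1-e)))^k < c :=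
        hGcont.eventually (eventually_lt_nhds (by rw [hG0]; exact hc))
      have hev2 : ∀ᶠ e in 𝓝 (0:ℝ), e < 1 - lam⁻¹ :=
        eventually_lt_nhds (by linarith)
      have hev := (((hev1.and hev2).filter_mono nhdsWithin_le_nhds).and
        (eventually_mem_nhdsWithin (s := Set.Ioi (0:ℝ)))).exists
      obtain ⟨e, ⟨hcG, heU⟩, he0⟩ := hev
      obtain ⟨δ, hδpos, hmain⟩ := main e he0 heU
      filter_upwards [hr0.eventually (eventually_lt_nhds hδpos)] with n hn
      exact lt_of_le_of_lt ((hmain (r n) (hrpos n) hn.le).2 k).2 hcG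

  constructor
  · -- part 1
    intro n k
    rw [ProbabilityTheory.cond_apply (Eset_measurable T p _ hSmeas (hBmeas n)) μ,
      muE_inter_U hSmeas hSpres (hBmeas n) k, muE_eq hSmeas hSpres (hBmeas n),
      div_eq_mul_inv, mul_comm]
  · -- part 2
    intro k
    have hevset : ∀ n : ℕ, {x | T^[p] x ∈ Qann T p (Metric.ball ζ (r n)) k ∧
        ∀ j < k, T^[p] x ∉ Qann T p (Metric.ball ζ (r n)) j}
        = (T^[p]) ⁻¹' (Qann T p (Metric.ball ζ (r n)) k) := by
      intro n
      ext x
      simp only [mem_setOf_eq, mem_preimage]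
      refine ⟨fun h => h.1, fun h => ⟨h, fun j hj hmem => ?_⟩⟩
      have h1 : T^[p] x ∈ Uset T p (Metric.ball ζ (r n)) (j+1) := by
        have hk : T^[p] x ∈ Uset T p (Metric.ball ζ (r n)) k := by
          rw [Qann_eq_diff] at h; exact h.1
        exact Uset_antitone T p (Metric.ball ζ (r n)) (Nat.succ_le_of_lt hj) hk
      rw [Qann_eq_diff] at hmem
      exact hmem.2 h1
    set li := lam⁻¹ with hlidef
    have hli1 : li < 1 := inv_lt_one_of_one_lt₀ hlam1
    have hli0 : 0 < li := by rw [hlidef]; positivity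
    obtain ⟨δ₀, hδ₀pos, hmain₀⟩ := main ((1-li)/2) (by linarith) (by linarith)
    have hbev : ∀ᶠ n in atTop, 0 < (μ (Metric.ball ζ (r n))).toReal := by
      filter_upwards [hr0.eventually (eventually_lt_nhds hδ₀pos)] with n hn
      exact (hmain₀ (r n) (hrpos n) hn.le).1
    have hnum := ((hratio k).sub (hratio (k+1))).sub ((hratio (k+1)).sub (hratio (k+2)))
    have hden := (hratio 0).sub (hratio 1)
    have hdenne : li^0 - li^1 ≠ 0 := by
      rw [pow_zero, pow_one]; exact ne_of_gt (by linarith)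
    have hdiv := Tendsto.div hnum hden hdenne
    have hval : ((li^k - li^(k+1)) - (li^(k+1) - li^(k+2)))/(li^0 - li^1)
        = (1 - li) * li^k := by
      have h1 : (1:ℝ) - li ≠ 0 := ne_of_gt (by linarith)
      rw [pow_zero, pow_one, pow_succ, pow_succ, pow_succ]
      field_simp
    rw [hval] at hdiv
    refine Tendsto.congr' ?_ (ENNReal.tendsto_ofReal hdiv)
    filter_upwards [hbev] with n hb
    rw [hevset n,
      ProbabilityTheory.cond_apply (Eset_measurable T p _ hSmeas (hBmeas n)) μ]
    have hfin : ∀ s : Set ℝ, μ s ≠ ⊤ := fun s => measure_ne_top μ s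
    have hXq := muE_inter_Q hSmeas hSpres (hBmeas n) k
    have e1 : (μ (Eset T p (Metric.ball ζ (r n)) ∩
          (T^[p]) ⁻¹' (Qann T p (Metric.ball ζ (r n)) k))).toReal
        = (μ (Qann T p (Metric.ball ζ (r n)) k)).toReal
          - (μ (Qann T p (Metric.ball ζ (r n)) (k+1))).toReal := by
      have h := congrArg ENNReal.toReal hXq
      rw [ENNReal.toReal_add (hfin _) (hfin _)] at h
      linarith
    have e3 : ∀ j : ℕ, (μ (Qann T p (Metric.ball ζ (r n)) j)).toReal
        = (μ (Uset T p (Metric.ball ζ (r n)) j)).toReal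
          - (μ (Uset T p (Metric.ball ζ (r n)) (j+1))).toReal := by
      intro j
      have h := congrArg ENNReal.toReal (muQ_add hSmeas hSpres (hBmeas n) j)
      rw [ENNReal.toReal_add (hfin _) (hfin _)] at h
      linarith
    have e2 : (μ (Eset T p (Metric.ball ζ (r n)))).toReal
        = (μ (Qann T p (Metric.ball ζ (r n)) 0)).toReal :=
      congrArg ENNReal.toReal (muE_eq hSmeas hSpres (hBmeas n))
    have hne : (μ (Eset T p (Metric.ball ζ (r n))))⁻¹
        * μ (Eset T p (Metric.ball ζ (r n)) ∩
            (T^[p]) ⁻¹' (Qann T p (Metric.ball ζ (r n)) k)) ≠ ⊤ := by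
      rcases eq_or_ne (μ (Eset T p (Metric.ball ζ (r n)))) 0 with h0 | h0
      · rw [measure_mono_null inter_subset_left h0, mul_zero]
        exact ENNReal.zero_ne_top
      · exact ENNReal.mul_ne_top (ENNReal.inv_ne_top.mpr h0) (hfin _)
    rw [← ENNReal.ofReal_toReal hne]
    congr 1
    rw [ENNReal.toReal_mul, ENNReal.toReal_inv, e1, e2, e3 k, e3 (k+1), e3 0]
    simp only [Pi.div_apply, div_sub_div_same]
    rw [div_helper' (ne_of_gt hb), div_eq_inv_mul]
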